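/- arXiv:2102.09374 — 6 statements merged into one kernel-verified Lean document; each statement's English description precedes it below -/
import Mathlib

section
/- Every completely erasing k-block substitution is strongly erasing: if σ is alternating and for every finite binary word w there exists n with σⁿ(w) = ε, then for every finite binary word w there exists n such that the empty word belongs to w^[n] (i.e., one can reach ε by iteratively k-rounding and applying σ). -/
/-- Apply a `k`-block substitution blockwise to a finite word, dropping the
trailing partial block (the paper's truncation convention). -/
def blockApply (k : Nat) (sigma : List Bool -> List Bool) (w : List Bool) : List Bool :=
  if h : 0 < k && k <= w.length then
    sigma (w.take k) ++ blockApply k sigma (w.drop k)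
  else []
termination_by w.length
decreasing_by
  simp only [Bool.and_eq_true, decide_eq_true_eq] at h
  simp [List.length_drop]
  omega

/-- The alternating extension of a block substitution given by simple
substitutions `s i : Bool -> List Bool` applied to the digit in position `i` mod `k`. -/
def altApply (k : Nat) (s : Nat -> Bool -> List Bool) (w : List Bool) : List Bool :=
  (w.zipIdx.map fun p => s (p.2 % k) p.1).flatten

/-- The set of `k`-roundings of a finite word `w`: extensions of `w` of length
the least multiple of `k` that is `≥ |w|`. -/
def kRound (k : Nat) (w : List Bool) : Set (List Bool) :=
  {u | ∃ v : List Bool, u = w ++ v ∧ u.length = k * ((w.length + k - 1) / k)}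

/-- `wIter k sigma n w` is the set `w^[n]` of the paper: `w^[0] = {w}` and
`w^[n] = {sigma(r) : r a k-rounding of an element of w^[n-1]}`. -/
def wIter (k : Nat) (sigma : List Bool -> List Bool) : Nat -> List Bool -> Set (List Bool)
  | 0, w => {w}
  | n + 1, w => {u | ∃ p ∈ wIter k sigma n w, ∃ r ∈ kRound k p, u = blockApply k sigma r}

/- ### Auxiliary lemmas -/

/-- The mapped enumeration only depends on the starting index mod `k`. -/
lemma map_enumFrom_mod (k : Nat) (s : Nat -> Bool -> List Bool) :
    ∀ (l : List Bool) (N M : Nat), N % k = M % k →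
      (l.zipIdx N).map (fun p => s (p.2 % k) p.1) =
      (l.zipIdx M).map (fun p => s (p.2 % k) p.1) := by
  intro l
  induction l with
  | nil => intro N M _; rfl
  | cons a t ih =>
    intro N M h
    simp only [List.zipIdx_cons, List.map_cons]
    have h1 : (N + 1) % k = (M + 1) % k := by
      rw [Nat.add_mod, h, ← Nat.add_mod]
    rw [h, ih (N + 1) (M + 1) h1]

lemma altApply_enumFrom (k : Nat) (s : Nat -> Bool -> List Bool) (w : List Bool) :
    altApply k s w = ((List.zipIdx w 0).map (fun p => s (p.2 % k) p.1)).flatten := rfl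

lemma altApply_append_mul (k : Nat) (s : Nat -> Bool -> List Bool) (u v : List Bool)
    (h : k ∣ u.length) :
    altApply k s (u ++ v) = altApply k s u ++ altApply k s v := by
  rw [altApply_enumFrom, altApply_enumFrom, altApply_enumFrom]
  rw [List.zipIdx_append, List.map_append, List.flatten_append]
  have h' : (0 + u.length) % k = 0 % k := by
    obtain ⟨c, hc⟩ := h
    simp [hc, Nat.mul_mod_right]
  rw [map_enumFrom_mod k s v (0 + u.length) 0 h']

/-- On words of length a multiple of `k`, `blockApply` agrees with `altApply`. -/
lemma blockApply_eq_altApply (k : Nat) (sigma : List Bool -> List Bool)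
    (s : Nat -> Bool -> List Bool) (hk : 0 < k)
    (halt : ∀ w : List Bool, w.length = k → sigma w = altApply k s w) :
    ∀ (w : List Bool), k ∣ w.length → blockApply k sigma w = altApply k s w := by
  intro w
  induction w using (measure List.length).wf.induction with
  | _ w ih =>
    intro hdvd
    rw [blockApply]
    by_cases h : k ≤ w.length
    · have hcond : (0 < k && k ≤ w.length) = true := by simp [hk, h]
      rw [dif_pos hcond]
      have htk : (w.take k).length = k := by simp [h]
      have hdk : k ∣ (w.drop k).length := by
        simp only [List.length_drop]
        exact Nat.dvd_sub hdvd dvd_rfl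
      rw [halt _ htk, ih (w.drop k) (by
        show (w.drop k).length < w.length
        simp only [List.length_drop]
        omega) hdk]
      rw [← altApply_append_mul k s _ _ (by rw [htk])]
      rw [List.take_append_drop]
    · have hw0 : w.length = 0 := by
        rcases Nat.eq_zero_or_pos w.length with h' | h'
        · exact h'
        · exact absurd (Nat.le_of_dvd h' hdvd) h
      have hwnil : w = [] := List.length_eq_zero_iff.mp hw0
      subst hwnil
      have hcnd : ¬ ((0 < k && k ≤ ([] : List Bool).length) = true) := by
        intro hcontra
        simp only [Bool.and_eq_true, decide_eq_true_eq, List.length_nil] at hcontra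
        omega
      rw [dif_neg hcnd]
      rfl

/-- One-step images compose with `wIter`. -/
lemma wIter_succ_of_step (k : Nat) (sigma : List Bool -> List Bool) :
    ∀ (n : Nat) (w w' u : List Bool),
      (∃ r ∈ kRound k w, w' = blockApply k sigma r) →
      u ∈ wIter k sigma n w' → u ∈ wIter k sigma (n + 1) w := by
  intro n
  induction n with
  | zero =>
    intro w w' u hstep hu
    have : u = w' := hu
    subst this
    exact ⟨w, rfl, hstep⟩
  | succ n ih =>
    intro w w' u hstep hu
    obtain ⟨p, hp, r, hr, hu⟩ := hu
    exact ⟨p, ih w w' p hstep hp, r, hr, hu⟩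

/-- every completely erasing `k`-block substitution (alternating,
with every finite word vanishing under some iterate of the alternating
extension) is strongly erasing: for every finite word `w` there is `n` with
`ε ∈ w^[n]`. -/
theorem completely_erasing_implies_strongly_erasing
    (k : Nat) (sigma : List Bool -> List Bool) (weps : List Bool)
    (hk : 2 ≤ k) (hlen : weps.length = k)
    (hne1 : weps ≠ List.replicate k true)
    (herase : ∀ w : List Bool, w.length = k → (sigma w = [] ↔ w = weps))
    (s : Nat -> Bool -> List Bool)
    (halt : ∀ w : List Bool, w.length = k → sigma w = altApply k s w)
    (hCE : ∀ w : List Bool, ∃ n : Nat, (altApply k s)^[n] w = []) :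
    ∀ w : List Bool, ∃ n : Nat, [] ∈ wIter k sigma n w := by
  have hk0 : 0 < k := by omega
  -- s i (weps[i]) = [] for each i < k
  have hA : ∀ (i : Nat) (h : i < weps.length), s i (weps[i]) = [] := by
    have h1 : altApply k s weps = [] := by
      rw [← halt weps hlen]
      exact (herase weps hlen).mpr rfl
    rw [altApply_enumFrom, List.flatten_eq_nil_iff] at h1
    intro i h
    have hmem0 : (weps[i], i) ∈ weps.zipIdx := by
      rw [List.mem_iff_getElem]
      exact ⟨i, by simpa using h, by simp [List.getElem_zipIdx]⟩
    have h2 := h1 _ (List.mem_map_of_mem (f := fun p : Bool × Nat => s (p.2 % k) p.1) hmem0)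
    simpa [Nat.mod_eq_of_lt (show i < k by omega)] using h2
  -- the canonical rounding tail
  have hround : ∀ w : List Bool, ∃ v : List Bool,
      (w ++ v) ∈ kRound k w ∧ blockApply k sigma (w ++ v) = altApply k s w := by
    intro w
    have hLmr := (Nat.div_add_mod w.length k).symm
    have hrk : w.length % k < k := Nat.mod_lt _ hk0
    by_cases h0 : w.length % k = 0
    · refine ⟨[], ⟨[], rfl, ?_⟩, ?_⟩
      · simp only [List.append_nil]
        have hq : (w.length + k - 1) / k = w.length / k := by
          have he : w.length + k - 1 = (k - 1) + k * (w.length / k) := by omega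
          rw [he, Nat.add_mul_div_left _ _ hk0, Nat.div_eq_of_lt (by omega), Nat.zero_add]
        rw [hq]; omega
      · rw [List.append_nil]
        exact blockApply_eq_altApply k sigma s hk0 halt w ⟨w.length / k, by omega⟩
    · have hkm : k * (w.length / k + 1) = k * (w.length / k) + k := by ring
      refine ⟨weps.drop (w.length % k), ⟨weps.drop (w.length % k), rfl, ?_⟩, ?_⟩
      · have hlen2 : (w ++ weps.drop (w.length % k)).length
            = w.length + (k - w.length % k) := by
          simp [List.length_drop, hlen]
        have hq : (w.length + k - 1) / k = w.length / k + 1 := by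
          have he : w.length + k - 1 = (w.length % k - 1) + k * (w.length / k + 1) := by
            omega
          rw [he, Nat.add_mul_div_left _ _ hk0, Nat.div_eq_of_lt (by omega), Nat.zero_add]
        rw [hlen2, hq]; omega
      · have hdvd : k ∣ (w ++ weps.drop (w.length % k)).length := by
          refine ⟨w.length / k + 1, ?_⟩
          simp only [List.length_append, List.length_drop, hlen]
          omega
        rw [blockApply_eq_altApply k sigma s hk0 halt _ hdvd]
        rw [altApply_enumFrom, altApply_enumFrom]
        rw [List.zipIdx_append, List.map_append, List.flatten_append]
        have htail : ((List.zipIdx (weps.drop (w.length % k)) (0 + w.length)).map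
            (fun p => s (p.2 % k) p.1)).flatten = [] := by
          rw [List.flatten_eq_nil_iff]
          intro x hx
          rw [List.mem_map] at hx
          obtain ⟨p, hp, hx⟩ := hx
          rw [List.mem_iff_getElem] at hp
          obtain ⟨j, hj, hpj⟩ := hp
          have hjlen : j < (weps.drop (w.length % k)).length := by simpa using hj
          rw [List.getElem_zipIdx] at hpj
          subst hpj
          subst hx
          have hjr : w.length % k + j < k := by
            simp only [List.length_drop, hlen] at hjlen; omega
          show s ((0 + w.length + j) % k) ((weps.drop (w.length % k))[j]) = []
          have hget : (weps.drop (w.length % k))[j]'hjlen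
              = weps[w.length % k + j]'(by omega) := by
            rw [List.getElem_drop]
          have hmod : (0 + w.length + j) % k = w.length % k + j := by
            rw [Nat.zero_add, Nat.add_mod,
              Nat.mod_eq_of_lt (show j < k by omega),
              Nat.mod_eq_of_lt hjr]
          rw [hmod, hget]
          exact hA _ (by omega)
        rw [htail, List.append_nil]
  -- main induction
  have key : ∀ (n : Nat) (w : List Bool), (altApply k s)^[n] w = [] →
      [] ∈ wIter k sigma n w := by
    intro n
    induction n with
    | zero =>
      intro w h
      simp only [Function.iterate_zero, id_eq] at h
      subst h
      rfl
    | succ n ih =>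
      intro w h
      rw [Function.iterate_succ_apply] at h
      obtain ⟨v, hv, hb⟩ := hround w
      exact wIter_succ_of_step k sigma n w (altApply k s w) []
        ⟨w ++ v, hv, hb.symm⟩ (ih _ h)
  intro w
  obtain ⟨n, hn⟩ := hCE w
  exact ⟨n, key n w hn⟩
end

section
/- For the 2-block substitution σ₃ defined by σ₃(00)=ε, σ₃(01)=1, σ₃(10)=0, σ₃(11)=01, extended alternately (odd-position 0s and even-position 0s map to ε, odd-position 1s map to 0, even-position 1s map to 1), every finite binary word w of positive length satisfies |σ₃²(w)| < |w|. Consequently for every finite word w there exists n with σ₃ⁿ(w) = ε, i.e., σ₃ is completely erasing. -/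
/-- The simple substitutions of the alternating 2-block substitution σ₃:
position ≡ 0 (mod 2): 0 ↦ ε, 1 ↦ 0; position ≡ 1 (mod 2): 0 ↦ ε, 1 ↦ 1.
Thus σ₃(00)=ε, σ₃(01)=1, σ₃(10)=0, σ₃(11)=01. -/
def s3 : Nat -> Bool -> List Bool := fun i b =>
  if b then (if i % 2 = 0 then [false] else [true]) else []

lemma s3_len (i : Nat) (b : Bool) : (s3 i b).length = if b then 1 else 0 := by
  cases b <;> simp [s3] <;> split <;> simp

lemma count_true_eq (w : List Bool) :
    (w.map fun b => if b then 1 else 0).sum = w.count true := by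
  induction w with
  | nil => simp
  | cons a t ih => cases a <;> simp [List.count_cons, ih] <;> omega

lemma lenA (w : List Bool) : (altApply 2 s3 w).length = w.count true := by
  rw [altApply, List.length_flatten, List.map_map]
  have h1 : (List.length ∘ fun p : Bool × Nat => s3 (p.2 % 2) p.1)
      = (fun b => if b then 1 else 0) ∘ Prod.fst := by
    funext p; simp [Function.comp, s3_len]
  rw [h1, ← List.map_map, List.zipIdx_map_fst, count_true_eq]

lemma head_false (t : List Bool) :
    ∃ r, altApply 2 s3 (true :: t) = false :: r := by
  refine ⟨((t.zipIdx 1).map fun p => s3 (p.2 % 2) p.1).flatten, ?_⟩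
  simp [altApply, List.zipIdx_cons, s3]

lemma shrink : ∀ w : List Bool, w ≠ [] → ((altApply 2 s3)^[2] w).length < w.length := by
  intro w hw
  have h2 : ((altApply 2 s3)^[2] w).length = (altApply 2 s3 w).count true := by
    simp [Function.iterate_succ, lenA]
  rw [h2]
  rcases lt_or_eq_of_le (List.count_le_length (a := true) (l := w)) with hlt | heq
  · calc (altApply 2 s3 w).count true ≤ (altApply 2 s3 w).length :=
          List.count_le_length
      _ = w.count true := lenA w
      _ < w.length := hlt
  · have hall : ∀ b ∈ w, b = true := fun b hb => ((List.count_eq_length).1 heq b hb).symm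
    obtain ⟨a, t, rfl⟩ := List.exists_cons_of_ne_nil hw
    have ha : a = true := hall a (by simp)
    subst ha
    obtain ⟨r, hr⟩ := head_false t
    rw [hr]
    have h1 : (false :: r).count true ≤ r.length := by
      simpa [List.count_cons] using List.count_le_length (a := true) (l := r)
    have hlen : (false :: r).length = (true :: t).length := by
      rw [← hr, lenA, heq]
    calc (false :: r).count true ≤ r.length := h1
      _ < (false :: r).length := by simp
      _ = (true :: t).length := hlen

lemma vanish : ∀ N (w : List Bool), w.length ≤ N → ∃ n : Nat, (altApply 2 s3)^[n] w = [] := by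
  intro N
  induction N with
  | zero =>
    intro w hw
    exact ⟨0, by simpa using List.length_eq_zero_iff.1 (Nat.le_zero.1 hw)⟩
  | succ N ih =>
    intro w hw
    cases w with
    | nil => exact ⟨0, rfl⟩
    | cons a t =>
      have h := shrink (a :: t) (by simp)
      obtain ⟨n, hn⟩ := ih ((altApply 2 s3)^[2] (a :: t)) (by omega)
      exact ⟨n + 2, by rw [Function.iterate_add_apply, hn]⟩

/-- every nonempty finite word strictly shrinks under two
applications of σ₃'s alternating extension; consequently every finite word
vanishes under some iterate, i.e. σ₃ is completely erasing. -/
theorem sigma3_completely_erasing :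
    (∀ w : List Bool, w ≠ [] → ((altApply 2 s3)^[2] w).length < w.length) ∧
    (∀ w : List Bool, ∃ n : Nat, (altApply 2 s3)^[n] w = []) := by
  exact ⟨shrink, fun w => vanish w.length w le_rfl⟩
end

section
/- The completely erasing substitution σ₃ is not boundedly erasing: the vanishing order ε(·) is unbounded on {0,1}^*. Specifically, for every m ∈ ℕ, the word 1^{2m} satisfies σ₃²(1^{2m}) = 1^m, so ε(1^{2m}) → ∞ as m → ∞. -/
lemma s3_shift (l : List Bool) : ∀ n : Nat,
    (List.zipIdx l (n + 2)).map (fun p => s3 (p.2 % 2) p.1)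
      = (List.zipIdx l n).map (fun p => s3 (p.2 % 2) p.1) := by
  induction l with
  | nil => intro n; simp
  | cons a l ih =>
    intro n
    have h : (n + 2) % 2 = n % 2 := Nat.add_mod_right n 2
    simp only [List.zipIdx_cons, List.map_cons, h]
    rw [show n + 2 + 1 = (n + 1) + 2 by ring, ih (n + 1)]

lemma altApply_cons2 (a b : Bool) (l : List Bool) :
    altApply 2 s3 (a :: b :: l) = s3 0 a ++ s3 1 b ++ altApply 2 s3 l := by
  unfold altApply
  have := s3_shift l 0
  simp only [List.zipIdx_cons, List.map_cons, List.flatten_cons, this]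
  simp [List.append_assoc]

lemma altApply_nil : altApply 2 s3 [] = [] := by simp [altApply]

def pat (m : Nat) : List Bool := (List.replicate m [false, true]).flatten

lemma pat_succ (m : Nat) : pat (m + 1) = false :: true :: pat m := by
  simp [pat, List.replicate_succ]

lemma step1 (m : Nat) :
    altApply 2 s3 (List.replicate (2 * m) true) = pat m := by
  induction m with
  | zero => simp [altApply, pat]
  | succ m ih =>
    have h : List.replicate (2 * (m + 1)) true
        = true :: true :: List.replicate (2 * m) true := by
      rw [show 2 * (m + 1) = (2 * m) + 1 + 1 by ring]
      simp [List.replicate_succ]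
    rw [h, altApply_cons2, ih, pat_succ]
    simp [s3]

lemma step2 (m : Nat) : altApply 2 s3 (pat m) = List.replicate m true := by
  induction m with
  | zero => simp [altApply, pat]
  | succ m ih =>
    rw [pat_succ, altApply_cons2, ih]
    simp [s3, List.replicate_succ]

lemma two_steps (m : Nat) :
    (altApply 2 s3)^[2] (List.replicate (2 * m) true) = List.replicate m true := by
  simp [Function.iterate_succ_apply, step1, step2]

lemma halving (k m : Nat) :
    (altApply 2 s3)^[2 * k] (List.replicate (2 ^ k * m) true)
      = List.replicate m true := by
  induction k generalizing m with
  | zero => simp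
  | succ k ih =>
    have h : 2 * (k + 1) = 2 * k + 2 := by ring
    rw [h, Function.iterate_add_apply]
    have h2 : 2 ^ (k + 1) * m = 2 * (2 ^ k * m) := by ring
    rw [h2, two_steps, ih]

/-- σ₃ is not boundedly erasing: `σ₃²(1^{2m}) = 1^m` for every
`m`, and the vanishing order is unbounded on finite words: for every `N` there
is a word not erased by any of the first `N` iterates. -/
theorem sigma3_not_boundedly_erasing :
    (∀ m : Nat, (altApply 2 s3)^[2] (List.replicate (2 * m) true)
        = List.replicate m true) ∧
    (∀ N : Nat, ∃ w : List Bool, ∀ n ≤ N, (altApply 2 s3)^[n] w ≠ []) := by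
  constructor
  · exact two_steps
  · intro N
    refine ⟨List.replicate (2 ^ N * 1) true, fun n hn hcon => ?_⟩
    have hfull : (altApply 2 s3)^[2 * N] (List.replicate (2 ^ N * 1) true)
        = List.replicate 1 true := halving N 1
    have hle : n ≤ 2 * N := le_trans hn (by omega)
    have : (altApply 2 s3)^[2 * N] (List.replicate (2 ^ N * 1) true) = [] := by
      rw [show 2 * N = (2 * N - n) + n by omega, Function.iterate_add_apply, hcon]
      clear hcon hfull
      induction (2 * N - n) with
      | zero => simp
      | succ k ih => rw [Function.iterate_succ_apply, altApply_nil, ih]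
    rw [hfull] at this
    simp at this
end

section
/- The 3-block substitution σ₄ (with σ₄(000)=ε, σ₄(001)=000, σ₄(010)=001, σ₄(011)=001000, σ₄(100)=010, σ₄(101)=010000, σ₄(110)=010001, σ₄(111)=010001000) is boundedly erasing: for every finite binary word w, σ₄⁸(w) = ε. -/
/-- The simple substitutions of the alternating 3-block substitution σ₄:
all 0s go to ε; a 1 in position ≡ 0, 1, 2 (mod 3) goes to 010, 001, 000
respectively. -/
def s4 : Nat -> Bool -> List Bool := fun i b =>
  if b then
    (if i % 3 = 0 then [false, true, false]
     else if i % 3 = 1 then [false, false, true]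
     else [false, false, false])
  else []

/-- Auxiliary: `altApply 3 s4` starting the position count at `n`. -/
def A (n : Nat) (w : List Bool) : List Bool :=
  ((w.zipIdx n).map fun p => s4 (p.2 % 3) p.1).flatten

lemma A_cons (n : Nat) (c : Bool) (w : List Bool) :
    A n (c :: w) = s4 (n % 3) c ++ A (n + 1) w := by
  simp [A, List.zipIdx_cons]

lemma A_congr {n m : Nat} (h : n % 3 = m % 3) (w : List Bool) : A n w = A m w := by
  induction w generalizing n m with
  | nil => rfl
  | cons c t ih => rw [A_cons, A_cons, h, ih (n := n + 1) (m := m + 1) (by omega)]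

lemma A_append (n : Nat) (u v : List Bool) :
    A n (u ++ v) = A n u ++ A (n + u.length) v := by
  induction u generalizing n with
  | nil => simp [A]
  | cons c t ih =>
    simp only [List.cons_append, A_cons, ih, List.append_assoc, List.length_cons]
    rw [A_congr (show (n + 1 + t.length) % 3 = (n + (t.length + 1)) % 3 by omega)]

lemma altApply_eq_A (w : List Bool) : altApply 3 s4 w = A 0 w := rfl

lemma A_join (l : List (List Bool)) (h : ∀ b ∈ l, b.length % 3 = 0) :
    A 0 l.flatten = (l.map (A 0)).flatten := by
  induction l with
  | nil => rfl
  | cons b t ih =>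
    simp only [List.flatten_cons, List.map_cons, A_append]
    rw [A_congr (show (0 + b.length) % 3 = 0 % 3 by
          have := h b (by simp); omega),
        ih (fun b hb => h b (by simp [hb]))]

def Blk (S : List (List Bool)) (w : List Bool) : Prop :=
  ∃ l : List (List Bool), (∀ b ∈ l, b ∈ S) ∧ w = l.flatten

lemma Blk_step {S S' : List (List Bool)}
    (hlen : ∀ b ∈ S, b.length % 3 = 0)
    (hmap : ∀ b ∈ S, altApply 3 s4 b ∈ S')
    {w : List Bool} (h : Blk S w) : Blk S' (altApply 3 s4 w) := by
  obtain ⟨l, hl, rfl⟩ := h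
  refine ⟨l.map (altApply 3 s4), ?_, ?_⟩
  · intro b hb
    obtain ⟨a, ha, rfl⟩ := List.mem_map.1 hb
    exact hmap a (hl a ha)
  · rw [altApply_eq_A, A_join l (fun b hb => hlen b (hl b hb))]
    rfl

def S2 : List (List Bool) :=
  [[false, true, false], [false, false, true], [false, false, false], []]
def S1 : List (List Bool) := [[false, false, true], [false, false, false], []]
def S0 : List (List Bool) := [[false, false, false], []]

lemma step1_s5 (w : List Bool) : Blk S2 (altApply 3 s4 w) := by
  refine ⟨w.zipIdx.map (fun p => s4 (p.2 % 3) p.1), ?_, ?_⟩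
  swap
  · rfl
  intro b hb
  obtain ⟨⟨c, i⟩, -, rfl⟩ := List.mem_map.1 hb
  cases c with
  | false => show [] ∈ S2; decide
  | true =>
    have h : i % 3 = 0 ∨ i % 3 = 1 ∨ i % 3 = 2 := by omega
    rcases h with h | h | h <;> simp [s4, h, S2]

/-- σ₄ (whose table of values on length-3 blocks is recorded in
the first conjunct) is boundedly erasing: `σ₄⁸(w) = ε` for every finite word. -/
theorem sigma4_boundedly_erasing :
    (altApply 3 s4 [false, false, false] = [] ∧
     altApply 3 s4 [false, false, true] = [false, false, false] ∧
     altApply 3 s4 [false, true, false] = [false, false, true] ∧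
     altApply 3 s4 [false, true, true] = [false, false, true, false, false, false] ∧
     altApply 3 s4 [true, false, false] = [false, true, false] ∧
     altApply 3 s4 [true, false, true] = [false, true, false, false, false, false] ∧
     altApply 3 s4 [true, true, false] = [false, true, false, false, false, true] ∧
     altApply 3 s4 [true, true, true]
        = [false, true, false, false, false, true, false, false, false]) ∧
    ∀ w : List Bool, (altApply 3 s4)^[8] w = [] := by
  constructor
  · exact ⟨by decide, by decide, by decide, by decide, by decide, by decide, by decide, by decide⟩
  intro w
  have h1 : Blk S2 (altApply 3 s4 w) := step1_s5 w
  have h2 : Blk S1 ((altApply 3 s4)^[2] w) := by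
    refine Blk_step ?_ ?_ h1 <;> · intro b hb; simp [S2] at hb; rcases hb with rfl | rfl | rfl | rfl <;> decide
  have h3 : Blk S0 ((altApply 3 s4)^[3] w) := by
    refine Blk_step ?_ ?_ h2 <;> · intro b hb; simp [S1] at hb; rcases hb with rfl | rfl | rfl <;> decide
  have h4 : (altApply 3 s4)^[4] w = [] := by
    obtain ⟨l, hl, hw⟩ := h3
    show altApply 3 s4 ((altApply 3 s4)^[3] w) = []
    rw [hw, altApply_eq_A, A_join l ?_]
    · apply List.flatten_eq_nil_iff.2
      intro b hb
      obtain ⟨a, ha, rfl⟩ := List.mem_map.1 hb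
      have := hl a ha
      simp [S0] at this
      rcases this with rfl | rfl <;> decide
    · intro b hb; have := hl b hb; simp [S0] at this; rcases this with rfl | rfl <;> decide
  have : (altApply 3 s4)^[8] w = (altApply 3 s4)^[4] ((altApply 3 s4)^[4] w) := by
    rw [← Function.iterate_add_apply]
  rw [this, h4]
  decide
end

section
/- If σ is a boundedly erasing k-block substitution (completely erasing with bounded vanishing order), then σ fails the optimality condition: there exists an infinite binary word w that cannot be written as an infinite concatenation of the nonempty images σ(u), u ∈ {0,1}^k. -/
/-- The length-`m` prefix of an infinite binary word. -/
def prefixOf (u : Nat -> Bool) (m : Nat) : List Bool := List.ofFn fun i : Fin m => u i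

/-- Concatenation of the first `m` words of a sequence of finite words. -/
def concatPre (v : Nat -> List Bool) (m : Nat) : List Bool :=
  (List.ofFn fun i : Fin m => v i).flatten

/-- The optimality condition: every infinite binary word is an infinite
concatenation of nonempty images of length-`k` blocks under `sigma`. -/
def OC (k : Nat) (sigma : List Bool -> List Bool) : Prop :=
  ∀ w : Nat -> Bool, ∃ u : Nat -> List Bool,
    (∀ i, (u i).length = k ∧ sigma (u i) ≠ []) ∧
    ∀ m, concatPre (fun i => sigma (u i)) m
        = prefixOf w (concatPre (fun i => sigma (u i)) m).length

namespace BEaux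

variable {k : Nat} {s : Nat -> Bool -> List Bool}

lemma altApply_nil : altApply k s [] = [] := rfl

lemma enumFrom_mod_congr (t : List Bool) : ∀ n m : Nat, n % k = m % k →
    ((t.zipIdx n).map fun p => s (p.2 % k) p.1).flatten
      = ((t.zipIdx m).map fun p => s (p.2 % k) p.1).flatten := by
  induction t with
  | nil => intro n m h; rfl
  | cons a t ih =>
    intro n m h
    simp only [List.zipIdx_cons, List.map_cons, List.flatten_cons]
    rw [h, ih (n+1) (m+1) (by rw [Nat.add_mod, h, ← Nat.add_mod])]

lemma altApply_eq_enumFrom (t : List Bool) {n : Nat} (h : n % k = 0) :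
    ((t.zipIdx n).map fun p => s (p.2 % k) p.1).flatten = altApply k s t := by
  rw [altApply]
  rw [enumFrom_mod_congr t n 0 (by simpa using h)]

lemma altApply_append (x t : List Bool) :
    altApply k s (x ++ t)
      = altApply k s x ++ ((t.zipIdx x.length).map fun p => s (p.2 % k) p.1).flatten := by
  simp only [altApply]
  rw [List.zipIdx_append, Nat.zero_add, List.map_append, List.flatten_append]

lemma altApply_prefix {x y : List Bool} (h : x <+: y) :
    altApply k s x <+: altApply k s y := by
  obtain ⟨t, rfl⟩ := h
  rw [altApply_append]
  exact List.prefix_append _ _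

lemma altApply_append_mod (x t : List Bool) (h : x.length % k = 0) :
    altApply k s (x ++ t) = altApply k s x ++ altApply k s t := by
  rw [altApply_append, altApply_eq_enumFrom t h]

lemma prefixOf_length (u : Nat → Bool) (m : Nat) : (prefixOf u m).length = m := by
  simp [prefixOf]

lemma prefixOf_add (u : Nat → Bool) (a b : Nat) :
    prefixOf u (a + b) = prefixOf u a ++ List.ofFn fun i : Fin b => u (a + ↑i) := by
  rw [prefixOf, prefixOf, List.ofFn_add]
  rfl

lemma prefixOf_prefix (u : Nat → Bool) {a b : Nat} (h : a ≤ b) :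
    prefixOf u a <+: prefixOf u b := by
  rw [← Nat.add_sub_cancel' h, prefixOf_add]
  exact List.prefix_append _ _

lemma prefix_of_prefixOf {p : List Bool} {u : Nat → Bool} {n : Nat}
    (h : p <+: prefixOf u n) : p = prefixOf u p.length := by
  apply List.ext_getElem (by rw [prefixOf_length])
  intro i h1 h2
  have hn : i < n := by
    have := h.length_le; rw [prefixOf_length] at this; omega
  rw [h.getElem h1]
  simp [prefixOf, List.getElem_ofFn]

lemma concatPre_zero (v : Nat → List Bool) : concatPre v 0 = [] := rfl

lemma concatPre_succ (v : Nat → List Bool) (m : Nat) :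
    concatPre v (m+1) = concatPre v m ++ v m := by
  rw [concatPre, concatPre, List.ofFn_succ']
  simp [List.concat_eq_append]

lemma concatPre_length {v : Nat → List Bool} (hv : ∀ i, (v i).length = k) (m : Nat) :
    (concatPre v m).length = k * m := by
  induction m with
  | zero => rfl
  | succ m ih => rw [concatPre_succ, List.length_append, ih, hv]; ring

lemma concatPre_length_ge {v : Nat → List Bool} (hv : ∀ i, v i ≠ []) (m : Nat) :
    m ≤ (concatPre v m).length := by
  induction m with
  | zero => simp
  | succ m ih =>
    rw [concatPre_succ, List.length_append]
    have : 1 ≤ (v m).length := List.length_pos_iff.mpr (hv m)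
    omega

lemma altApply_concatPre {u : Nat → List Bool} (hu : ∀ i, (u i).length = k) (m : Nat) :
    altApply k s (concatPre u m) = concatPre (fun i => altApply k s (u i)) m := by
  induction m with
  | zero => rfl
  | succ m ih =>
    rw [concatPre_succ, altApply_append_mod _ _ (by rw [concatPre_length hu]; simp [Nat.mul_mod_right]),
      ih, concatPre_succ]

lemma concatPre_eq_prefixOf (hk : 0 < k) {u : Nat → List Bool} (hu : ∀ i, (u i).length = k)
    (m : Nat) :
    concatPre u m = prefixOf (fun n => (u (n / k)).getD (n % k) false) (k * m) := by
  induction m with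
  | zero => simp [concatPre_zero, prefixOf]
  | succ m ih =>
    have hblock : u m = List.ofFn fun i : Fin k =>
        (u ((k * m + ↑i) / k)).getD ((k * m + ↑i) % k) false := by
      apply List.ext_getElem (by simp [hu m])
      intro i h1 h2
      have hik : i < k := by simpa using h2
      rw [List.getElem_ofFn]
      have hdiv : (k * m + i) / k = m := by
        rw [Nat.mul_add_div hk, Nat.div_eq_of_lt hik]; omega
      have hmod : (k * m + i) % k = i := by
        rw [Nat.mul_add_mod, Nat.mod_eq_of_lt hik]
      simp only [hdiv, hmod]
      exact (List.getD_eq_getElem _ _ (by rw [hu m]; exact hik)).symm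
    rw [concatPre_succ, ih, Nat.mul_succ, prefixOf_add]
    congr 1

lemma key {sigma : List Bool → List Bool} (hk : 0 < k)
    (halt : ∀ w : List Bool, w.length = k → sigma w = altApply k s w)
    (hOC : OC k sigma) :
    ∀ (j : Nat) (w : Nat → Bool) (m : Nat),
      ∃ (x : List Bool) (L : Nat), m ≤ L ∧ (altApply k s)^[j] x = prefixOf w L := by
  intro j
  induction j with
  | zero => intro w m; exact ⟨prefixOf w m, m, le_refl _, rfl⟩
  | succ j ih =>
    intro w m
    obtain ⟨u, hu, hpre⟩ := hOC w
    set w' : Nat → Bool := fun n => (u (n / k)).getD (n % k) false with hw'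
    have hImg : ∀ M : Nat, altApply k s (prefixOf w' (k * M))
        = prefixOf w (concatPre (fun i => sigma (u i)) M).length := by
      intro M
      have h1 : (fun i => altApply k s (u i)) = fun i => sigma (u i) := by
        funext i; exact (halt (u i) (hu i).1).symm
      rw [← concatPre_eq_prefixOf hk (fun i => (hu i).1),
        altApply_concatPre (fun i => (hu i).1), h1, ← hpre M]
    obtain ⟨x, L', hL', hx⟩ := ih w' (k * m)
    -- altApply (prefixOf w' L') is a prefix of w
    have h2 : altApply k s (prefixOf w' L') <+: altApply k s (prefixOf w' (k * L')) :=
      altApply_prefix (prefixOf_prefix w' (Nat.le_mul_of_pos_left L' hk))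
    rw [hImg L'] at h2
    have h3 := prefix_of_prefixOf h2
    -- lower bound on its length
    have h4 : altApply k s (prefixOf w' (k * m)) <+: altApply k s (prefixOf w' L') :=
      altApply_prefix (prefixOf_prefix w' hL')
    have h5 : m ≤ (altApply k s (prefixOf w' L')).length := by
      have := h4.length_le
      rw [hImg m, prefixOf_length] at this
      exact le_trans (concatPre_length_ge (fun i => (hu i).2) m) this
    refine ⟨x, (altApply k s (prefixOf w' L')).length, h5, ?_⟩
    rw [Function.iterate_succ_apply', hx]
    exact h3

end BEaux

/-- a boundedly erasing `k`-block substitution (alternating, with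
bounded vanishing order) fails the optimality condition. -/
theorem boundedly_erasing_not_optimal
    (k : Nat) (sigma : List Bool -> List Bool) (weps : List Bool)
    (hk : 2 ≤ k) (hlen : weps.length = k)
    (hne1 : weps ≠ List.replicate k true)
    (herase : ∀ w : List Bool, w.length = k → (sigma w = [] ↔ w = weps))
    (s : Nat -> Bool -> List Bool)
    (halt : ∀ w : List Bool, w.length = k → sigma w = altApply k s w)
    (hbound : ∃ N : Nat, ∀ w : List Bool, ∃ n ≤ N, (altApply k s)^[n] w = []) :
    ¬ OC k sigma := by
  intro hOC
  obtain ⟨N, hN⟩ := hbound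
  obtain ⟨x, L, hL, hx⟩ := BEaux.key (k := k) (s := s) (by omega) halt hOC N (fun _ => false) 1
  obtain ⟨n, hn, hxn⟩ := hN x
  have hNx : (altApply k s)^[N] x = [] := by
    have : (altApply k s)^[(N - n) + n] x = (altApply k s)^[N - n] ((altApply k s)^[n] x) :=
      Function.iterate_add_apply _ _ _ _
    rw [Nat.sub_add_cancel hn] at this
    rw [this, hxn, Function.iterate_fixed BEaux.altApply_nil]
  rw [hx] at hNx
  have := congrArg List.length hNx
  rw [BEaux.prefixOf_length] at this
  simp at this
  omega
end

section
/- Suppose σ is a k-block erasing substitution satisfying the optimality condition. Then the induced interval map f_σ: [0,1] → [0,1] is surjective. -/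
/-- Value of a finite binary word read as binary digits after the point. -/
noncomputable def valFin (w : List Bool) : ℝ :=
  (w.zipIdx.map fun p => if p.1 then ((2:ℝ))⁻¹ ^ (p.2 + 1) else 0).sum

/-- Value of an infinite binary word read as binary digits after the point. -/
noncomputable def valInf (u : Nat -> Bool) : ℝ :=
  ∑' i : Nat, if u i then ((2:ℝ))⁻¹ ^ (i + 1) else 0

/-- A word is not eventually zero (it has infinitely many ones). -/
def NEZ (u : Nat -> Bool) : Prop := ∀ n, ∃ m, n ≤ m ∧ u m = true

open Classical in
/-- The unique binary expansion of `x ∈ (0,1]` not ending in `0^∞`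
(junk value, the zero word, if no such expansion exists). -/
noncomputable def tilde (x : ℝ) : Nat -> Bool :=
  if h : ∃ u : Nat -> Bool, NEZ u ∧ valInf u = x then h.choose else fun _ => false

open Classical in
/-- The interval map induced by the erasing `k`-block substitution `sigma`
(with erased block `weps`) acting on binary expansions: `f x = 0.sigma(x̃)`,
with value `0` at `x = 0` (no expansion not ending in `0^∞`) and when
`x̃ = weps^∞`. -/
noncomputable def fSigma (k : Nat) (sigma : List Bool -> List Bool) (weps : List Bool)
    (x : ℝ) : ℝ :=
  if (¬ ∃ u : Nat -> Bool, NEZ u ∧ valInf u = x) ∨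
     (∀ i : Nat, tilde x i = weps.getD (i % k) false) then 0
  else ⨆ n : Nat, valFin (blockApply k sigma (prefixOf (tilde x) (n * k)))






noncomputable def gdig (u : Nat → Bool) (i : Nat) : ℝ := if u i then ((2:ℝ))⁻¹ ^ (i + 1) else 0

lemma g_nonneg (u : Nat → Bool) (i : Nat) : 0 ≤ gdig u i := by
  unfold gdig; split <;> positivity

lemma g_le (u : Nat → Bool) (i : Nat) : gdig u i ≤ ((2:ℝ))⁻¹ ^ (i+1) := by
  unfold gdig; split
  · exact le_refl _
  · positivity

lemma summable_pow : Summable (fun i : ℕ => ((2:ℝ))⁻¹ ^ (i+1)) := by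
  have := (summable_geometric_of_lt_one (by norm_num) (by norm_num : (2:ℝ)⁻¹ < 1)).mul_left (2:ℝ)⁻¹
  simpa [pow_succ, mul_comm] using this

lemma summable_g (u : Nat → Bool) : Summable (gdig u) :=
  Summable.of_nonneg_of_le (g_nonneg u) (g_le u) summable_pow

lemma tsum_pow_eq : ∑' i : ℕ, ((2:ℝ))⁻¹ ^ (i+1) = 1 := by
  have h : ∑' i : ℕ, ((2:ℝ))⁻¹ ^ i = 2 := by
    rw [tsum_geometric_of_lt_one (by norm_num) (by norm_num : (2:ℝ)⁻¹ < 1)]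
    norm_num
  calc ∑' i : ℕ, ((2:ℝ))⁻¹ ^ (i+1) = ∑' i : ℕ, (2:ℝ)⁻¹ * (2:ℝ)⁻¹ ^ i := by
        congr 1; funext i; ring
    _ = (2:ℝ)⁻¹ * ∑' i : ℕ, ((2:ℝ))⁻¹ ^ i := by rw [tsum_mul_left]
    _ = 1 := by rw [h]; norm_num

lemma valInf_eq (u : Nat → Bool) : valInf u = ∑' i, gdig u i := rfl

lemma valInf_nonneg (u : Nat → Bool) : 0 ≤ valInf u :=
  tsum_nonneg (g_nonneg u)

lemma valInf_le_one (u : Nat → Bool) : valInf u ≤ 1 := by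
  rw [valInf_eq, ← tsum_pow_eq]
  exact Summable.tsum_le_tsum (g_le u) (summable_g u) summable_pow

lemma valFin_append_single (l : List Bool) (b : Bool) :
    valFin (l ++ [b]) = valFin l + (if b then ((2:ℝ))⁻¹ ^ (l.length + 1) else 0) := by
  simp [valFin, List.zipIdx_append]

lemma prefixOf_succ (u : Nat → Bool) (m : Nat) :
    prefixOf u (m+1) = prefixOf u m ++ [u m] := by
  rw [prefixOf, prefixOf, List.ofFn_succ', List.concat_eq_append]
  simp

lemma length_prefixOf (u : Nat → Bool) (m : Nat) : (prefixOf u m).length = m := by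
  simp [prefixOf]

lemma valFin_prefixOf (u : Nat → Bool) (m : Nat) :
    valFin (prefixOf u m) = ∑ i ∈ Finset.range m, gdig u i := by
  induction m with
  | zero => simp [prefixOf, valFin]
  | succ n ih =>
    rw [prefixOf_succ, valFin_append_single, ih, length_prefixOf, Finset.sum_range_succ]
    rfl


lemma S_mono (u : Nat → Bool) : Monotone (fun m => ∑ i ∈ Finset.range m, gdig u i) :=
  fun a b hab => Finset.sum_le_sum_of_subset_of_nonneg
    (Finset.range_subset_range.mpr hab) (fun i _ _ => g_nonneg u i)

lemma S_le_valInf (u : Nat → Bool) (m : Nat) :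
    ∑ i ∈ Finset.range m, gdig u i ≤ valInf u :=
  Summable.sum_le_tsum _ (fun i _ => g_nonneg u i) (summable_g u)

lemma valInf_pos (u : Nat → Bool) (h : NEZ u) : 0 < valInf u := by
  obtain ⟨m, -, hm⟩ := h 0
  have : gdig u m ≤ valInf u := Summable.le_tsum (summable_g u) m (fun j _ => g_nonneg u j)
  have hg : (0:ℝ) < gdig u m := by simp [gdig, hm]
  linarith

lemma tail_le (u : Nat → Bool) (n : Nat) :
    ∑' i, gdig u (i + n) ≤ ((2:ℝ))⁻¹ ^ n := by
  have hs : Summable (fun i => gdig u (i + n)) := (summable_g u).comp_injective (add_left_injective n)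
  calc ∑' i, gdig u (i + n) ≤ ∑' i : ℕ, ((2:ℝ))⁻¹ ^ (i + n + 1) := by
        exact Summable.tsum_le_tsum (fun i => g_le u (i+n)) hs
          (by exact summable_pow.comp_injective (add_left_injective n))
    _ = ∑' i : ℕ, ((2:ℝ))⁻¹ ^ (i+1) * ((2:ℝ))⁻¹ ^ n := by congr 1; funext i; ring
    _ = (∑' i : ℕ, ((2:ℝ))⁻¹ ^ (i+1)) * ((2:ℝ))⁻¹ ^ n := tsum_mul_right
    _ = ((2:ℝ))⁻¹ ^ n := by rw [tsum_pow_eq, one_mul]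

/-- Uniqueness of NEZ expansions. -/
lemma NEZ_injOn {a b : Nat → Bool} (ha : NEZ a) (hb : NEZ b)
    (hv : valInf a = valInf b) : a = b := by
  by_contra hne
  have hex : ∃ n, a n ≠ b n := by
    by_contra h; push_neg at h; exact hne (funext h)
  classical
  set n := Nat.find hex with hn
  have hdiff : a n ≠ b n := Nat.find_spec hex
  have hagree : ∀ i < n, a i = b i := fun i hi => by
    by_contra h; exact absurd (Nat.find_le h : n ≤ i) (by omega)
  -- WLOG helper
  have key : ∀ (a b : Nat → Bool), NEZ a → a n = true → b n = false →
      (∀ i < n, a i = b i) → valInf b < valInf a := by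
    intro a b ha han hbn hag
    have hsa := summable_g a
    have hsb := summable_g b
    have hsplit_a := Summable.sum_add_tsum_nat_add (f := gdig a) n hsa
    have hsplit_b := Summable.sum_add_tsum_nat_add (f := gdig b) n hsb
    have hSeq : ∑ i ∈ Finset.range n, gdig a i = ∑ i ∈ Finset.range n, gdig b i := by
      apply Finset.sum_congr rfl
      intro i hi
      rw [Finset.mem_range] at hi
      simp [gdig, hag i hi]
    -- tail of b
    have hb_tail : ∑' i, gdig b (i + n) ≤ ((2:ℝ))⁻¹ ^ (n+1) := by
      have hsb' : Summable (fun i => gdig b (i + n)) :=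
        hsb.comp_injective (add_left_injective n)
      rw [Summable.tsum_eq_zero_add hsb']
      have h0 : gdig b (0 + n) = 0 := by simp [gdig, hbn]
      rw [h0, zero_add]
      calc ∑' i, gdig b (i + 1 + n) = ∑' i, gdig b (i + (n+1)) := by
            congr 1; funext i; congr 1; omega
        _ ≤ ((2:ℝ))⁻¹ ^ (n+1) := tail_le b (n+1)
    -- tail of a
    have ha_tail : ((2:ℝ))⁻¹ ^ (n+1) < ∑' i, gdig a (i + n) := by
      have hsa' : Summable (fun i => gdig a (i + n)) :=
        hsa.comp_injective (add_left_injective n)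
      rw [Summable.tsum_eq_zero_add hsa']
      have h0 : gdig a (0 + n) = ((2:ℝ))⁻¹ ^ (n+1) := by simp [gdig, han]
      rw [h0]
      have hsa'' : Summable (fun i => gdig a (i + 1 + n)) :=
        hsa.comp_injective ((add_left_injective n).comp (add_left_injective 1))
      obtain ⟨m, hm, hmt⟩ := ha (n+1)
      have : gdig a m ≤ ∑' i, gdig a (i + 1 + n) := by
        have := Summable.le_tsum hsa'' (m - n - 1) (fun j _ => g_nonneg a _)
        have he : m - n - 1 + 1 + n = m := by omega
        rwa [he] at this
      have hg : (0:ℝ) < gdig a m := by simp [gdig, hmt]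
      have : (0:ℝ) < ∑' i, gdig a (i + 1 + n) := lt_of_lt_of_le hg this
      linarith
    have : ∑' i, gdig b (i + n) < ∑' i, gdig a (i + n) :=
      lt_of_le_of_lt hb_tail ha_tail
    rw [valInf_eq, valInf_eq, ← hsplit_a, ← hsplit_b, ← hSeq]
    linarith
  cases hab : a n with
  | true =>
    have hbn : b n = false := by cases hbn : b n; rfl; exact absurd (hab.trans hbn.symm) hdiff
    exact absurd hv (ne_of_gt (key a b ha hab hbn hagree))
  | false =>
    have hbn : b n = true := by cases hbn : b n; exact absurd (hab.trans hbn.symm) hdiff; rfl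
    exact absurd hv (ne_of_gt (key b a hb hbn hab (fun i hi => (hagree i hi).symm))).symm

/-- Existence of a NEZ binary expansion for `y ∈ (0,1]`. -/
lemma exists_NEZ_expansion {y : ℝ} (h0 : 0 < y) (h1 : y ≤ 1) :
    ∃ u : Nat → Bool, NEZ u ∧ valInf u = y := by
  classical
  set c : ℕ → ℤ := fun n => ⌈y * 2 ^ n⌉ with hc
  have hceil_lt : ∀ n, (c n : ℝ) - 1 < y * 2 ^ n := fun n => by
    have := Int.ceil_lt_add_one (y * 2 ^ n); push_cast; linarith [Int.sub_one_lt_floor (y * 2^n), Int.le_ceil (y * 2^n)]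
  have hle_ceil : ∀ n, y * 2 ^ n ≤ (c n : ℝ) := fun n => Int.le_ceil _
  have hdich : ∀ n, c (n+1) = 2 * c n - 1 ∨ c (n+1) = 2 * c n := by
    intro n
    have h2 : y * 2 ^ (n+1) ≤ ((2 * c n : ℤ) : ℝ) := by
      push_cast; rw [pow_succ]; nlinarith [hle_ceil n]
    have h3 : ((2 * c n - 2 : ℤ) : ℝ) < y * 2 ^ (n+1) := by
      push_cast; rw [pow_succ]; nlinarith [hceil_lt n]
    have hub : c (n+1) ≤ 2 * c n := Int.ceil_le.mpr h2
    have hlb : 2 * c n - 2 < c (n+1) := Int.lt_ceil.mpr h3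
    omega
  set u : ℕ → Bool := fun n => decide (c (n+1) = 2 * c n) with hu
  have hS : ∀ n, ∑ i ∈ Finset.range n, gdig u i = ((c n : ℝ) - 1) / 2 ^ n := by
    intro n
    induction n with
    | zero =>
      have : c 0 = 1 := by
        rw [hc]; simp only [pow_zero, mul_one]
        rw [Int.ceil_eq_iff]
        constructor <;> push_cast <;> linarith
      simp [this]
    | succ n ih =>
      rw [Finset.sum_range_succ, ih]
      rcases hdich n with hd | hd
      · have hun : u n = false := by
          simp only [hu, decide_eq_false_iff_not]
          omega
        rw [show gdig u n = 0 by simp [gdig, hun]]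
        rw [hd]; push_cast; field_simp; ring
      · have hun : u n = true := by simp [hu, hd]
        rw [show gdig u n = ((2:ℝ))⁻¹ ^ (n+1) by simp [gdig, hun]]
        rw [hd]; push_cast; rw [inv_pow]; field_simp; ring
  have hSlt : ∀ n, ((c n : ℝ) - 1) / 2 ^ n < y := by
    intro n
    rw [div_lt_iff₀ (by positivity)]
    linarith [hceil_lt n]
  have hSge : ∀ n, y - ((2:ℝ))⁻¹ ^ n ≤ ((c n : ℝ) - 1) / 2 ^ n := by
    intro n
    rw [le_div_iff₀ (by positivity)]
    have := hle_ceil n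
    have h2 : ((2:ℝ))⁻¹ ^ n * 2 ^ n = 1 := by
      rw [← mul_pow]; norm_num
    nlinarith
  have htend : Filter.Tendsto (fun n => ∑ i ∈ Finset.range n, gdig u i)
      Filter.atTop (nhds y) := by
    refine tendsto_of_tendsto_of_tendsto_of_le_of_le
      (g := fun n : ℕ => y - ((2:ℝ))⁻¹ ^ n) (h := fun _ : ℕ => y) ?_ ?_ ?_ ?_
    · have : Filter.Tendsto (fun n : ℕ => ((2:ℝ))⁻¹ ^ n) Filter.atTop (nhds 0) :=
        tendsto_pow_atTop_nhds_zero_of_lt_one (by norm_num) (by norm_num)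
      simpa using Filter.Tendsto.const_sub y this
    · exact tendsto_const_nhds
    · intro n; simp only []; rw [hS n]; exact hSge n
    · intro n; simp only []; rw [hS n]; exact le_of_lt (hSlt n)
  have hval : valInf u = y := by
    have := ((summable_g u).hasSum_iff_tendsto_nat).mpr htend
    exact this.tsum_eq
  refine ⟨u, ?_, hval⟩
  intro n
  by_contra hcon
  push_neg at hcon
  have hzero : ∀ m, n ≤ m → gdig u m = 0 := by
    intro m hm
    have := hcon m hm
    simp [gdig, Bool.eq_false_iff.mpr (by simpa using this)]
  have : valInf u = ∑ i ∈ Finset.range n, gdig u i := by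
    rw [valInf_eq, ← Summable.sum_add_tsum_nat_add n (summable_g u)]
    have he : (fun i => gdig u (i + n)) = fun _ => (0:ℝ) :=
      funext fun i => hzero (i + n) (by omega)
    rw [he, tsum_zero, add_zero]
  rw [hval, hS n] at this
  exact absurd this (ne_of_gt (hSlt n))

lemma iSup_S_eq (u : ℕ → Bool) (L : ℕ → ℕ) (hL : ∀ M, ∃ n, M ≤ L n) :
    ⨆ n, ∑ i ∈ Finset.range (L n), gdig u i = valInf u := by
  have hbdd : BddAbove (Set.range fun n => ∑ i ∈ Finset.range (L n), gdig u i) := by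
    refine ⟨valInf u, ?_⟩
    rintro _ ⟨n, rfl⟩
    exact S_le_valInf u (L n)
  apply le_antisymm
  · exact ciSup_le fun n => S_le_valInf u (L n)
  · rw [valInf_eq]
    apply Summable.tsum_le_of_sum_range_le (summable_g u)
    intro M
    obtain ⟨n, hn⟩ := hL M
    exact le_trans (S_mono u hn) (le_ciSup hbdd n)


lemma concatPre_zero (v : ℕ → List Bool) : concatPre v 0 = [] := by
  simp [concatPre]

lemma concatPre_succ (v : ℕ → List Bool) (n : ℕ) :
    concatPre v (n+1) = concatPre v n ++ v n := by
  rw [concatPre, concatPre, List.ofFn_succ']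
  simp [List.concat_eq_append]

lemma concatPre_cons (v : ℕ → List Bool) (n : ℕ) :
    concatPre v (n+1) = v 0 ++ concatPre (fun i => v (i+1)) n := by
  rw [concatPre, concatPre, List.ofFn_succ]
  simp

lemma length_concatPre (v : ℕ → List Bool) (n : ℕ) :
    (concatPre v n).length = ∑ i ∈ Finset.range n, (v i).length := by
  rw [concatPre, List.length_flatten, List.map_ofFn, List.sum_ofFn]
  rw [Finset.sum_range]
  rfl

lemma blockApply_nil (k : ℕ) (sigma : List Bool → List Bool) :
    blockApply k sigma [] = [] := by
  rw [blockApply]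
  have h : ¬ ((0 < k && k ≤ ([]:List Bool).length) = true) := by simp; omega
  rw [dif_neg h]

lemma blockApply_block (k : ℕ) (hk : 0 < k) (sigma : List Bool → List Bool)
    (b w : List Bool) (hb : b.length = k) :
    blockApply k sigma (b ++ w) = sigma b ++ blockApply k sigma (List.drop k (b ++ w)) := by
  rw [blockApply]
  have hc : (0 < k && k ≤ (b ++ w).length) = true := by
    simp [List.length_append, hb, hk]
  rw [dif_pos hc, List.take_left' hb]

lemma blockApply_concatPre (k : ℕ) (hk : 0 < k) (sigma : List Bool → List Bool) (n : ℕ) :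
    ∀ v : ℕ → List Bool, (∀ i, (v i).length = k) →
    blockApply k sigma (concatPre v n) = concatPre (fun i => sigma (v i)) n := by
  induction n with
  | zero => intro v hv; simp [concatPre_zero, blockApply_nil]
  | succ n ih =>
    intro v hv
    rw [concatPre_cons, blockApply_block k hk sigma _ _ (hv 0),
      List.drop_left' (hv 0), ih (fun i => v (i+1)) (fun i => hv (i+1)),
      concatPre_cons]

lemma prefixOf_add (v : ℕ → Bool) (a b : ℕ) :
    prefixOf v (a + b) = prefixOf v a ++ List.ofFn (fun j : Fin b => v (a + j)) := by
  rw [prefixOf, prefixOf, List.ofFn_add]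
  rfl

lemma ofFn_getD (k : ℕ) (l : List Bool) (h : l.length = k) :
    List.ofFn (fun j : Fin k => l.getD j false) = l := by
  subst h
  have : (fun j : Fin l.length => l.getD j false) = fun j : Fin l.length => l[(j:ℕ)] := by
    funext j
    exact List.getD_eq_getElem l false j.isLt
  rw [this]
  exact List.ofFn_getElem

lemma prefixOf_blockword (k : ℕ) (hk : 0 < k) (u' : ℕ → List Bool)
    (hlen : ∀ i, (u' i).length = k) (n : ℕ) :
    prefixOf (fun j => (u' (j / k)).getD (j % k) false) (n * k) = concatPre u' n := by
  induction n with
  | zero => simp [prefixOf, concatPre_zero]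
  | succ n ih =>
    have hmul : (n+1) * k = n * k + k := by ring
    rw [hmul, prefixOf_add, ih, concatPre_succ]
    congr 1
    have he : (fun j : Fin k => (u' ((n * k + ↑j) / k)).getD ((n * k + ↑j) % k) false)
        = fun j : Fin k => (u' n).getD (↑j) false := by
      funext j
      have h1 : (n * k + ↑j) / k = n := by
        rw [mul_comm, Nat.mul_add_div hk, Nat.div_eq_of_lt j.isLt, add_zero]
      have h2 : (n * k + ↑j) % k = ↑j := by
        rw [mul_comm, Nat.mul_add_mod, Nat.mod_eq_of_lt j.isLt]
      rw [h1, h2]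
    rw [he, ofFn_getD k (u' n) (hlen n)]

lemma exists_true_of_ne_replicate {k : ℕ} (l : List Bool) (hl : l.length = k)
    (hne : l ≠ List.replicate k false) : ∃ j < k, l.getD j false = true := by
  by_contra hall
  push_neg at hall
  apply hne
  have h1 := ofFn_getD k l hl
  rw [← h1]
  have : (fun j : Fin k => l.getD (↑j) false) = fun _ : Fin k => false := by
    funext j
    have := hall j j.isLt
    simpa using this
  rw [this]
  exact List.ofFn_const k false

/-- if the erasing `k`-block substitution `sigma` satisfies the
optimality condition, the induced interval map `fSigma` maps `[0,1]` onto
`[0,1]`. -/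
theorem fSigma_surjective
    (k : Nat) (sigma : List Bool -> List Bool) (weps : List Bool)
    (hk : 2 ≤ k) (hlen : weps.length = k)
    (hne1 : weps ≠ List.replicate k true)
    (herase : ∀ w : List Bool, w.length = k → (sigma w = [] ↔ w = weps))
    (hOC : OC k sigma) :
    Set.SurjOn (fSigma k sigma weps) (Set.Icc 0 1) (Set.Icc 0 1) := by
  intro y hy
  have hk0 : 0 < k := by omega
  rcases eq_or_lt_of_le hy.1 with h0 | h0
  · -- y = 0
    refine ⟨0, ⟨le_refl 0, by norm_num⟩, ?_⟩
    rw [fSigma, if_pos]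
    · exact h0
    · left
      rintro ⟨u, hu, hval⟩
      exact absurd hval (ne_of_gt (valInf_pos u hu))
  · -- 0 < y
    obtain ⟨w, hw, hwval⟩ := exists_NEZ_expansion h0 hy.2
    obtain ⟨u, hu, hconc⟩ := hOC w
    classical
    set u' : ℕ → List Bool := fun i => if i % 2 = 0 then u (i/2) else weps with hu'
    have hlen' : ∀ i, (u' i).length = k := by
      intro i
      by_cases h : i % 2 = 0 <;> simp [hu', h, (hu _).1, hlen]
    set v : ℕ → Bool := fun j => (u' (j / k)).getD (j % k) false with hv
    have hvb : ∀ m j, j < k → v (m * k + j) = (u' m).getD j false := by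
      intro m j hj
      show (u' ((m*k+j)/k)).getD ((m*k+j)%k) false = _
      rw [mul_comm, Nat.mul_add_div hk0, Nat.div_eq_of_lt hj, add_zero,
        Nat.mul_add_mod, Nat.mod_eq_of_lt hj]
    have hune : ∀ i, u i ≠ weps := by
      intro i hcon
      exact (hu i).2 ((herase (u i) (hu i).1).mpr hcon)
    have hweps0 : sigma weps = [] := (herase weps hlen).mpr rfl
    have hu'even : ∀ m, u' (2*m) = u m := by
      intro m
      have h1 : (2*m) % 2 = 0 := by omega
      have h2 : (2*m) / 2 = m := by omega
      simp [hu', h1, h2]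
    have hu'odd : ∀ m, u' (2*m+1) = weps := by
      intro m
      have h1 : (2*m+1) % 2 ≠ 0 := by omega
      simp [hu', h1]
    -- v is NEZ
    have hNEZ : NEZ v := by
      intro N
      have hblock : ∃ l, N ≤ l ∧ ∃ j < k, (u' l).getD j false = true := by
        by_cases hw0 : weps = List.replicate k false
        · refine ⟨2*N, by omega, ?_⟩
          rw [hu'even]
          refine exists_true_of_ne_replicate (u N) (hu N).1 ?_
          rw [← hw0]
          exact hune N
        · refine ⟨2*N+1, by omega, ?_⟩
          rw [hu'odd]
          exact exists_true_of_ne_replicate weps hlen hw0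
      obtain ⟨l, hl, j, hj, htrue⟩ := hblock
      refine ⟨l * k + j, ?_, ?_⟩
      · have : l ≤ l * k := Nat.le_mul_of_pos_right l hk0
        omega
      · rw [hvb l j hj]
        exact htrue
    set x := valInf v with hx
    have hex : ∃ a : Nat → Bool, NEZ a ∧ valInf a = x := ⟨v, hNEZ, rfl⟩
    have htilde : tilde x = v := by
      rw [tilde, dif_pos hex]
      exact NEZ_injOn hex.choose_spec.1 hNEZ hex.choose_spec.2
    refine ⟨x, ⟨valInf_nonneg v, valInf_le_one v⟩, ?_⟩
    have hne2 : ¬ (∀ i : Nat, tilde x i = weps.getD (i % k) false) := by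
      intro hall
      apply hune 0
      have ha := ofFn_getD k (u 0) (hu 0).1
      have hb := ofFn_getD k weps hlen
      rw [← ha, ← hb]
      congr 1
      funext j
      have h1 := hall j
      rw [htilde] at h1
      have h2 : v (↑j : ℕ) = (u' 0).getD (↑j) false := by
        have := hvb 0 j j.isLt
        simpa using this
      have h3 : u' 0 = u 0 := by simpa using hu'even 0
      have h4 : (↑j : ℕ) % k = ↑j := Nat.mod_eq_of_lt j.isLt
      rw [h2, h3, h4] at h1
      rw [h1]
    rw [fSigma, if_neg (by rw [not_or]; exact ⟨not_not_intro hex, hne2⟩)]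
    rw [htilde]
    -- identify the partial images
    have hC : ∀ n, concatPre (fun i => sigma (u' i)) n
        = concatPre (fun i => sigma (u i)) ((n+1)/2) := by
      have hpair : ∀ m, concatPre (fun i => sigma (u' i)) (2*m)
            = concatPre (fun i => sigma (u i)) m
          ∧ concatPre (fun i => sigma (u' i)) (2*m+1)
            = concatPre (fun i => sigma (u i)) (m+1) := by
        intro m
        induction m with
        | zero =>
          constructor
          · simp [concatPre_zero]
          · show concatPre (fun i => sigma (u' i)) (0+1) = _
            rw [concatPre_succ, concatPre_succ, concatPre_zero, concatPre_zero]
            simp [hu'even 0]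
        | succ m ih =>
          have e1 : 2*(m+1) = (2*m+1)+1 := by ring
          have e2 : 2*(m+1)+1 = ((2*m+1)+1)+1 := by ring
          have hfst : concatPre (fun i => sigma (u' i)) (2*(m+1))
              = concatPre (fun i => sigma (u i)) (m+1) := by
            rw [e1, concatPre_succ, ih.2]
            have : u' (2*m+1) = weps := hu'odd m
            simp [this, hweps0]
          constructor
          · exact hfst
          · rw [e2, concatPre_succ, ← e1, hfst, hu'even (m+1),
              concatPre_succ (fun i => sigma (u i)) (m+1)]
      intro n
      rcases Nat.even_or_odd n with ⟨m, hm⟩ | ⟨m, hm⟩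
      · have : n = 2*m := by omega
        subst this
        have : (2*m+1)/2 = m := by omega
        rw [this]
        exact (hpair m).1
      · have : n = 2*m+1 := by omega
        subst this
        have : (2*m+1+1)/2 = m+1 := by omega
        rw [this]
        exact (hpair m).2
    set L : ℕ → ℕ := fun n => (concatPre (fun i => sigma (u i)) ((n+1)/2)).length with hL
    have hmain : (fun n => valFin (blockApply k sigma (prefixOf v (n * k))))
        = fun n => ∑ i ∈ Finset.range (L n), gdig w i := by
      funext n
      rw [prefixOf_blockword k hk0 u' hlen' n,
        blockApply_concatPre k hk0 sigma n u' hlen', hC n, hconc ((n+1)/2),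
        valFin_prefixOf]
    rw [hmain]
    have hLub : ∀ M, ∃ n, M ≤ L n := by
      intro M
      refine ⟨2*M+1, ?_⟩
      have h1 : (2*M+1+1)/2 = M+1 := by omega
      rw [hL]
      simp only [h1]
      rw [length_concatPre]
      have : ∀ i ∈ Finset.range (M+1), 1 ≤ (sigma (u i)).length := by
        intro i _
        exact List.length_pos_iff.mpr (hu i).2
      calc M ≤ M + 1 := by omega
        _ = ∑ _i ∈ Finset.range (M+1), 1 := by simp
        _ ≤ ∑ i ∈ Finset.range (M+1), (sigma (u i)).length := Finset.sum_le_sum this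
    rw [iSup_S_eq w L hLub, hwval]
end
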